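/- Let F be a field, r ≤ min(n,p), and let J_r ∈ Mat_{n,p}(F) be the matrix with identity I_r in the top-left r×r block and zeros elsewhere. Let N ∈ Mat_{n,p}(F) be a matrix whose only possibly nonzero column is the last one. If rank(J_r + N) ≤ r and p > r, then the last n − r entries of the last column of N are zero. -/

import Mathlib

/-- If `N` is supported in its last column and `rank (J_r + N) ≤ r` (with
`r ≤ n`, `r < p`), then the last `n - r` entries of the last column of `N`
vanish; since the other columns of `N` are zero, all rows of `N` of index
`≥ r` vanish. -/
theorem last_column_entries_vanish (F : Type*) [Field F] (n p r : ℕ)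
    (hrn : r ≤ n) (hrp : r < p)
    (N : Matrix (Fin n) (Fin p) F)
    (hN : ∀ (i : Fin n) (j : Fin p), (j : ℕ) + 1 ≠ p → N i j = 0)
    (h : ((Matrix.of fun (i : Fin n) (j : Fin p) =>
        if (i : ℕ) = (j : ℕ) ∧ (i : ℕ) < r then (1 : F) else 0) + N).rank ≤ r) :
    ∀ (i : Fin n) (j : Fin p), r ≤ (i : ℕ) → N i j = 0 := by
  intro i j hi
  by_cases hj : (j : ℕ) + 1 ≠ p
  · exact hN i j hj
  push_neg at hj
  by_contra hne
  set M : Matrix (Fin n) (Fin p) F :=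
    (Matrix.of fun (i : Fin n) (j : Fin p) =>
        if (i : ℕ) = (j : ℕ) ∧ (i : ℕ) < r then (1 : F) else 0) + N with hM
  -- the column selection
  have hrp' : r + 1 ≤ p := hrp
  set g : Fin (r + 1) → Fin p := fun k =>
    if hk : (k : ℕ) < r then ⟨k, lt_of_lt_of_le hk hrp.le⟩ else j with hg
  -- the column vectors
  set v : Fin (r + 1) → (Fin n → F) := fun k => fun i' => M i' (g k) with hv
  have hNsmall : ∀ (i' : Fin n) (a : ℕ) (ha : a < p), a < r →
      N i' ⟨a, ha⟩ = 0 := by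
    intro i' a ha har
    exact hN i' ⟨a, ha⟩ (by simp; omega)
  have hlin : LinearIndependent F v := by
    rw [Fintype.linearIndependent_iff]
    intro c hc
    -- evaluate at row i : get c ⟨r⟩ = 0
    have hcr : c ⟨r, Nat.lt_succ_self r⟩ = 0 := by
      have := congrFun hc i
      simp only [Finset.sum_apply, Pi.smul_apply, Pi.zero_apply, smul_eq_mul, hv] at this
      rw [Finset.sum_eq_single (⟨r, Nat.lt_succ_self r⟩ : Fin (r + 1))] at this
      · have hgr : g ⟨r, Nat.lt_succ_self r⟩ = j := by simp [hg]
        have hMij : M i j = N i j := by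
          simp [hM, Matrix.of_apply]
          omega
        rw [hgr, hMij] at this
        exact (mul_eq_zero.mp this).resolve_right hne
      · intro k _ hk
        have hkr : (k : ℕ) < r := by
          rcases Nat.lt_succ_iff_lt_or_eq.mp k.isLt with h' | h'
          · exact h'
          · exact absurd (Fin.ext h' : k = ⟨r, Nat.lt_succ_self r⟩) hk
        have hgk : g k = ⟨(k : ℕ), lt_of_lt_of_le hkr hrp.le⟩ := by simp [hg, hkr]
        have : M i (g k) = 0 := by
          rw [hgk]
          show (if (i : ℕ) = (k : ℕ) ∧ (i : ℕ) < r then (1:F) else 0) + _ = 0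
          rw [if_neg (by omega), hNsmall i k _ hkr, zero_add]
        rw [this, mul_zero]
      · intro hmem; exact absurd (Finset.mem_univ _) hmem
    -- now each c ⟨a⟩ = 0 for a < r
    intro k
    rcases Nat.lt_succ_iff_lt_or_eq.mp k.isLt with hkr | hkr
    · have := congrFun hc ⟨(k : ℕ), lt_of_lt_of_le hkr hrn⟩
      simp only [Finset.sum_apply, Pi.smul_apply, Pi.zero_apply, smul_eq_mul, hv] at this
      rw [Finset.sum_eq_single k] at this
      · have hgk : g k = ⟨(k : ℕ), lt_of_lt_of_le hkr hrp.le⟩ := by simp [hg, hkr]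
        have hMk : M ⟨(k : ℕ), lt_of_lt_of_le hkr hrn⟩ (g k) = 1 := by
          rw [hgk]
          have : N ⟨(k : ℕ), lt_of_lt_of_le hkr hrn⟩ ⟨(k : ℕ), lt_of_lt_of_le hkr hrp.le⟩ = 0 :=
            hNsmall _ _ _ hkr
          simp [hM, Matrix.of_apply, this, hkr]
        rw [hMk, mul_one] at this
        exact this
      · intro b _ hbk
        rcases Nat.lt_succ_iff_lt_or_eq.mp b.isLt with hbr | hbr
        · have hgb : g b = ⟨(b : ℕ), lt_of_lt_of_le hbr hrp.le⟩ := by simp [hg, hbr]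
          have : M ⟨(k : ℕ), lt_of_lt_of_le hkr hrn⟩ (g b) = 0 := by
            rw [hgb]
            have hNb : N ⟨(k : ℕ), lt_of_lt_of_le hkr hrn⟩ ⟨(b : ℕ), lt_of_lt_of_le hbr hrp.le⟩
                = 0 := hNsmall _ _ _ hbr
            have hkb : (k : ℕ) ≠ (b : ℕ) := fun hh => hbk (Fin.ext hh.symm)
            simp [hM, Matrix.of_apply, hNb]
            intro h1; omega
          rw [this, mul_zero]
        · have hb : b = ⟨r, Nat.lt_succ_self r⟩ := by
            ext; simp [hbr]
          rw [hb, hcr, zero_mul]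
      · intro hmem; exact absurd (Finset.mem_univ _) hmem
    · have hk2 : k = ⟨r, Nat.lt_succ_self r⟩ := by ext; simp [hkr]
      rw [hk2]; exact hcr
  -- span of v is inside range of mulVecLin
  have hspan : Submodule.span F (Set.range v) ≤ LinearMap.range M.mulVecLin := by
    rw [Submodule.span_le]
    rintro _ ⟨k, rfl⟩
    exact ⟨Pi.single (g k) 1, by simp [Matrix.mulVecLin_apply, hv]; rfl⟩
  have hfr : r + 1 ≤ M.rank := by
    have h1 : Module.finrank F (Submodule.span F (Set.range v)) = r + 1 := by
      rw [finrank_span_eq_card hlin, Fintype.card_fin]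
    calc r + 1 = Module.finrank F (Submodule.span F (Set.range v)) := h1.symm
      _ ≤ Module.finrank F (LinearMap.range M.mulVecLin) := Submodule.finrank_mono hspan
      _ = M.rank := rfl
  omega
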